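/- Let f and g be entire functions on ℂ, and suppose g is a polynomial of degree m. Then there exists a polynomial p of degree less than m and an entire function h such that f(z) = p(z) + h(z)·g(z) for all z ∈ ℂ. -/

import Mathlib

open Polynomial

/-- dslope of an entire function is entire. -/
lemma differentiable_dslope_entire {f : ℂ → ℂ} (hf : Differentiable ℂ f) (a : ℂ) :
    Differentiable ℂ (dslope f a) := by
  rw [← differentiableOn_univ]
  exact (Complex.differentiableOn_dslope (by simp)).2 hf.differentiableOn

/-- Division with remainder of an entire function by a polynomial of degree `m`:
there is a polynomial remainder of degree `< m` and an entire quotient. -/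
theorem entire_division_by_polynomial
    (f : ℂ → ℂ) (hf : Differentiable ℂ f)
    (m : ℕ) (G : Polynomial ℂ) (hG : G.degree = (m : WithBot ℕ)) :
    ∃ (p : Polynomial ℂ) (h : ℂ → ℂ),
      p.degree < (m : WithBot ℕ) ∧ Differentiable ℂ h ∧
      ∀ z : ℂ, f z = p.eval z + h z * G.eval z := by
  induction m generalizing f G with
  | zero =>
    have hGC : G = C (G.coeff 0) := eq_C_of_degree_le_zero (le_of_eq (by simpa using hG))
    have hGne : G ≠ 0 := fun h => by simp [h] at hG
    have hc : G.coeff 0 ≠ 0 := fun h => hGne (by rw [hGC, h, map_zero])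
    refine ⟨0, fun z => f z / G.coeff 0, by simp, hf.div_const _, fun z => ?_⟩
    rw [hGC]
    field_simp
    simp [coeff_C_zero, hc]
  | succ n ih =>
    have hGpos : 0 < G.degree := by rw [hG]; exact_mod_cast Nat.succ_pos n
    obtain ⟨a, ha⟩ := Complex.exists_root hGpos
    obtain ⟨G₁, hG₁⟩ := (dvd_iff_isRoot).2 ha
    have hG₁deg : G₁.degree = (n : WithBot ℕ) := by
      have hGne : G ≠ 0 := fun h => by
        rw [h, degree_zero] at hG
        exact absurd hG.symm (by exact_mod_cast WithBot.coe_ne_bot)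
      have hG₁ne : G₁ ≠ 0 := fun h => hGne (by rw [hG₁, h, mul_zero])
      have hnd : G.natDegree = n + 1 := natDegree_eq_of_degree_eq_some hG
      have : G.natDegree = (X - C a).natDegree + G₁.natDegree :=
        hG₁ ▸ natDegree_mul (X_sub_C_ne_zero a) hG₁ne
      rw [natDegree_X_sub_C, hnd] at this
      have : G₁.natDegree = n := by omega
      rw [degree_eq_natDegree hG₁ne, this]
    obtain ⟨p₁, h, hp₁deg, hhdiff, hheq⟩ :=
      ih (dslope f a) (differentiable_dslope_entire hf a) G₁ hG₁deg
    refine ⟨C (f a) + (X - C a) * p₁, h, ?_, hhdiff, fun z => ?_⟩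
    · apply lt_of_le_of_lt (degree_add_le _ _)
      rw [max_lt_iff]
      constructor
      · exact lt_of_le_of_lt (degree_C_le) (by exact_mod_cast Nat.succ_pos n)
      · rw [degree_mul, degree_X_sub_C]
        calc 1 + p₁.degree < 1 + (n : WithBot ℕ) :=
              WithBot.add_lt_add_left (by simp) hp₁deg
          _ = ((n + 1 : ℕ) : WithBot ℕ) := by
              rw [add_comm]; exact_mod_cast rfl
    · have key : f z = f a + (z - a) * dslope f a z := by
        have := sub_smul_dslope f a z
        rw [smul_eq_mul] at this
        linear_combination -this
      rw [key, hheq z, hG₁]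
      simp only [eval_add, eval_mul, eval_sub, eval_X, eval_C]
      ring
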